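/- Let p be a prime and α ∈ ℚ_p. Suppose A_1/B_1, A_2/B_2 are fractions in lowest terms with A_i, B_i ∈ ℤ, B_i > 0, |B_2| > |B_1| ≥ 1, A_1/B_1 ≠ A_2/B_2, |B_i| ≥ |A_i|, and both satisfy |α − A_i/B_i|_p < 1/(2|B_i|^{2+ε}) for some ε > 0. Then |B_2| > |B_1|^{1+ε}. -/

import Mathlib

lemma norm_int_inv_le (p : ℕ) [Fact p.Prime] (m : ℤ) (hm : m ≠ 0) :
    ((|m| : ℝ))⁻¹ ≤ ‖(m : ℚ_[p])‖ := by
  have hp1 : (1 : ℝ) < p := by exact_mod_cast (Fact.out : p.Prime).one_lt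
  set v := padicValInt p m with hv
  have hdvd : (p : ℤ) ^ v ∣ m := padicValInt_dvd m
  have hple : (p : ℤ) ^ v ≤ |m| := Int.le_of_dvd (abs_pos.mpr hm) ((dvd_abs _ _).mpr hdvd)
  have hnorm : ‖(m : ℚ_[p])‖ = ((p : ℝ) ^ v)⁻¹ := by
    have : ((m : ℚ) : ℚ_[p]) = (m : ℚ_[p]) := by push_cast; ring
    rw [← this, Padic.eq_padicNorm,
      padicNorm.eq_zpow_of_nonzero (q := (m : ℚ)) (by exact_mod_cast hm),
      padicValRat.of_int, ← hv]
    push_cast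
    rw [zpow_neg, zpow_natCast]
  rw [hnorm]
  apply inv_anti₀ (by positivity)
  exact_mod_cast hple

theorem stmt_7 (p : ℕ) [Fact p.Prime] (α : ℚ_[p]) (ε : ℝ) (hε : 0 < ε)
    (A₁ A₂ B₁ B₂ : ℤ)
    (hB₁pos : 0 < B₁) (hB₂pos : 0 < B₂)
    (hgcd₁ : Int.gcd A₁ B₁ = 1) (hgcd₂ : Int.gcd A₂ B₂ = 1)
    (hB : |B₁| < |B₂|) (hB₁ : 1 ≤ |B₁|)
    (hne : (A₁ : ℚ_[p]) / (B₁ : ℚ_[p]) ≠ (A₂ : ℚ_[p]) / (B₂ : ℚ_[p]))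
    (hAB₁ : |A₁| ≤ |B₁|) (hAB₂ : |A₂| ≤ |B₂|)
    (h₁ : ‖α - (A₁ : ℚ_[p]) / (B₁ : ℚ_[p])‖ < 1 / (2 * (|B₁| : ℝ) ^ ((2 : ℝ) + ε)))
    (h₂ : ‖α - (A₂ : ℚ_[p]) / (B₂ : ℚ_[p])‖ < 1 / (2 * (|B₂| : ℝ) ^ ((2 : ℝ) + ε))) :
    ((|B₁| : ℝ)) ^ ((1 : ℝ) + ε) < (|B₂| : ℝ) := by
  have hB₁0 : (B₁ : ℚ_[p]) ≠ 0 := by exact_mod_cast hB₁pos.ne'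
  have hB₂0 : (B₂ : ℚ_[p]) ≠ 0 := by exact_mod_cast hB₂pos.ne'
  set b₁ : ℝ := (|B₁| : ℝ) with hb₁
  set b₂ : ℝ := (|B₂| : ℝ) with hb₂
  have hb₁1 : (1 : ℝ) ≤ b₁ := by rw [hb₁]; exact_mod_cast hB₁
  have hb₁pos : (0 : ℝ) < b₁ := lt_of_lt_of_le one_pos hb₁1
  have hb12 : b₁ < b₂ := by rw [hb₁, hb₂]; exact_mod_cast hB
  have hb₂pos : (0 : ℝ) < b₂ := hb₁pos.trans hb12
  set D : ℤ := A₁ * B₂ - A₂ * B₁ with hD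
  have hDne : D ≠ 0 := by
    intro h
    apply hne
    rw [div_eq_div_iff hB₁0 hB₂0]
    have h' : A₁ * B₂ = A₂ * B₁ := by omega
    exact_mod_cast congrArg (Int.cast : ℤ → ℚ_[p]) h'
  -- |D| ≤ 2 b₁ b₂
  have hDabs : (|D| : ℝ) ≤ 2 * (b₁ * b₂) := by
    have : |D| ≤ 2 * (|B₁| * |B₂|) := by
      calc |D| ≤ |A₁ * B₂| + |A₂ * B₁| := abs_sub _ _
        _ = |A₁| * |B₂| + |A₂| * |B₁| := by rw [abs_mul, abs_mul]
        _ ≤ |B₁| * |B₂| + |B₂| * |B₁| :=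
            add_le_add (mul_le_mul_of_nonneg_right hAB₁ (abs_nonneg _))
              (mul_le_mul_of_nonneg_right hAB₂ (abs_nonneg _))
        _ = 2 * (|B₁| * |B₂|) := by ring
    calc (|D| : ℝ) ≤ ((2 * (|B₁| * |B₂|) : ℤ) : ℝ) := by exact_mod_cast this
      _ = 2 * (b₁ * b₂) := by push_cast; ring
  -- difference equality
  have hdiff : (A₁ : ℚ_[p]) / B₁ - (A₂ : ℚ_[p]) / B₂ = (D : ℚ_[p]) / ((B₁ : ℚ_[p]) * B₂) := by
    rw [hD]
    field_simp
    push_cast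
    ring
  -- lower bound on the norm of the difference
  have hlow : (2 * (b₁ * b₂))⁻¹ ≤ ‖(A₁ : ℚ_[p]) / B₁ - (A₂ : ℚ_[p]) / B₂‖ := by
    rw [hdiff, norm_div]
    have hden : 0 < ‖(B₁ : ℚ_[p]) * B₂‖ := norm_pos_iff.mpr (mul_ne_zero hB₁0 hB₂0)
    have hden1 : ‖(B₁ : ℚ_[p]) * B₂‖ ≤ 1 := by
      have : ((B₁ * B₂ : ℤ) : ℚ_[p]) = (B₁ : ℚ_[p]) * B₂ := by push_cast; ring
      rw [← this]; exact Padic.norm_int_le_one _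
    have h1 : (2 * (b₁ * b₂))⁻¹ ≤ (|D| : ℝ)⁻¹ :=
      inv_anti₀ (by exact_mod_cast abs_pos.mpr hDne) hDabs
    have h2 : ((|D| : ℝ))⁻¹ ≤ ‖(D : ℚ_[p])‖ := norm_int_inv_le p D hDne
    have h3 : ‖(D : ℚ_[p])‖ ≤ ‖(D : ℚ_[p])‖ / ‖(B₁ : ℚ_[p]) * B₂‖ := by
      rw [le_div_iff₀ hden]
      exact mul_le_of_le_one_right (norm_nonneg _) hden1
    linarith
  -- upper bound via ultrametric inequality
  have hup : ‖(A₁ : ℚ_[p]) / B₁ - (A₂ : ℚ_[p]) / B₂‖ < 1 / (2 * b₁ ^ ((2:ℝ) + ε)) := by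
    have heq : (A₁ : ℚ_[p]) / B₁ - (A₂ : ℚ_[p]) / B₂ =
        ((A₁ : ℚ_[p]) / B₁ - α) + (α - (A₂ : ℚ_[p]) / B₂) := by ring
    rw [heq]
    refine lt_of_le_of_lt (Padic.nonarchimedean _ _) (max_lt ?_ ?_)
    · rw [norm_sub_rev]; exact h₁
    · refine h₂.trans_le ?_
      have : b₁ ^ ((2:ℝ) + ε) ≤ b₂ ^ ((2:ℝ) + ε) :=
        Real.rpow_le_rpow hb₁pos.le hb12.le (by linarith)
      exact one_div_le_one_div_of_le (by positivity) (by linarith)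
  -- conclude
  have hkey : (2 * (b₁ * b₂))⁻¹ < 1 / (2 * b₁ ^ ((2:ℝ) + ε)) := lt_of_le_of_lt hlow hup
  rw [one_div] at hkey
  have hbp : (0 : ℝ) < b₁ ^ ((2:ℝ) + ε) := Real.rpow_pos_of_pos hb₁pos _
  have hlt : 2 * b₁ ^ ((2:ℝ) + ε) < 2 * (b₁ * b₂) := by
    exact (inv_lt_inv₀ (by positivity) (by positivity)).mp hkey
  have hsplit : b₁ ^ ((2:ℝ) + ε) = b₁ * b₁ ^ ((1:ℝ) + ε) := by
    rw [show (2:ℝ) + ε = 1 + (1 + ε) by ring, Real.rpow_add hb₁pos, Real.rpow_one]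
  rw [hsplit] at hlt
  have := lt_of_mul_lt_mul_left (by linarith : b₁ * b₁ ^ ((1:ℝ)+ε) < b₁ * b₂) hb₁pos.le
  exact this
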